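/- Let T = (T_0, T_1, …) be an extended D-connection for a B-derivation D: A → F. Define h_0 := id_A and h_i(a) := (1/i)·T_{i-1}(D(a)) ∈ S^i(F) for i ≥ 1 (via the quotient R^i(F) → S^i(F)). Then h = (h_0, h_1, …): A → Π_{i≥0} S^i(F) is a B-algebra homomorphism into the completed symmetric algebra; i.e., h_i(ab) = Σ_{j=0}^{i} h_j(a)·h_{i-j}(b) for all a, b ∈ A and all i ≥ 0. In particular, h is a Hasse derivation of F extending D. -/

import Mathlib

open scoped TensorProduct

noncomputable section

variable (A : Type) [CommRing A]
variable (F : Type) [AddCommGroup F] [Module A F]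

/-- `n`-fold tensor power `T^n(F)`. -/
abbrev TPow (n : ℕ) := PiTensorProduct A (fun _ : Fin n => F)

/-- The submodule of symmetry relations. -/
def symRel (n : ℕ) : Submodule A (TPow A F n) :=
  Submodule.span A
    {x | ∃ (m : Fin n → F) (e : Equiv.Perm (Fin n)),
      x = PiTensorProduct.tprod A m - PiTensorProduct.tprod A (m ∘ e)}

/-- Symmetric power `S^n(F)`. -/
abbrev SymPow (n : ℕ) := TPow A F n ⧸ symRel A F n

/-- Class of the word `m₀ ⋯ m_{n-1}` in `S^n(F)`. -/
def mkS {n : ℕ} (m : Fin n → F) : SymPow A F n :=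
  Submodule.Quotient.mk (PiTensorProduct.tprod A m)

/-- Class of a list of elements of `F` in the symmetric power. -/
def mkSL (l : List F) : SymPow A F l.length := mkS A F l.get

/-- `RPow A F n` is `R^{n+1}(F) = S^n(F) ⊗_A F`. -/
abbrev RPow (n : ℕ) := SymPow A F n ⊗[A] F

/-- Class of the word `m₀ ⋯ m_n` in `R^{n+1}(F) = S^n(F) ⊗ F`. -/
def mkR {n : ℕ} (m : Fin (n + 1) → F) : RPow A F n :=
  mkS A F (fun i : Fin n => m i.castSucc) ⊗ₜ[A] m (Fin.last n)

/-- The `i`-th "rotation" of the word `m` appearing in the definition of the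
switch operator: `m_n m_{n-1} ⋯ m_{n-i+1} m_0 m_1 ⋯ m_{n-i}` (0-indexed). -/
def rot {n : ℕ} (m : Fin (n + 1) → F) (i : ℕ) : Fin (n + 1) → F := fun j =>
  if j.val < i then m ⟨n - j.val, by have := j.isLt; omega⟩
  else m ⟨j.val - i, by have := j.isLt; omega⟩

/-- `σ` is the switch operator on `R^{n+1}(F)`:
`σ(m_0⋯m_n) = ∑_{i=1}^{n} m_n m_{n-1}⋯m_{n-i+1} m_0 m_1 ⋯ m_{n-i}`. -/
def IsSwitch (n : ℕ) (σ : RPow A F n →ₗ[A] RPow A F n) : Prop :=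
  ∀ m : Fin (n + 1) → F,
    σ (mkR A F m) = ∑ i ∈ Finset.Icc 1 n, mkR A F (rot F m i)

/-- `K^{n+1}(F) = σ*(R^{n+1}(F))`, described by its generators `σ*(m_0⋯m_n)`. -/
def KSub (n : ℕ) : Submodule A (RPow A F n) :=
  Submodule.span A
    {x | ∃ m : Fin (n + 1) → F,
      x = mkR A F m + ∑ i ∈ Finset.Icc 1 n, mkR A F (rot F m i)}

/-- `K²(F) ⊆ T²(F) = F ⊗ F`: the kernel of `T²(F) → Λ²(F)`, i.e. the image of `1 + σ`. -/
def K2Sub : Submodule A (F ⊗[A] F) :=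
  Submodule.span A {x | ∃ u v : F, x = u ⊗ₜ[A] v + v ⊗ₜ[A] u}

/-- The word `m₀ ⋯ m_{p-1} u m'₀ ⋯ m'_{q-1}`. -/
def joinWord {p q : ℕ} (m : Fin p → F) (u : F) (m' : Fin q → F) :
    Fin (p + q + 1) → F := fun j =>
  if h : j.val < p then m ⟨j.val, h⟩
  else if _h2 : j.val < p + 1 then u
  else m' ⟨j.val - (p + 1), by have := j.isLt; omega⟩

/-- The concatenated word `m₀ ⋯ m_{p-1} m'₀ ⋯ m'_{q-1}`. -/
def appendWord {p q : ℕ} (m : Fin p → F) (m' : Fin q → F) : Fin (p + q) → F := fun j =>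
  if h : j.val < p then m ⟨j.val, h⟩
  else m' ⟨j.val - p, by have := j.isLt; omega⟩

/-- `mul` is the multiplication `R^{p+1}(F) × R^{q+1}(F) → R^{p+q+2}(F)` of the graded
algebra `R(F)`, recorded with values in `∏ₖ R^{k+1}(F)`:
`(s ⊗ u)·(s' ⊗ v) = (s u s') ⊗ v`. -/
def IsMulR (mul : ∀ p q, RPow A F p →ₗ[A] RPow A F q →ₗ[A] ∀ k, RPow A F k) : Prop :=
  ∀ (p q : ℕ) (m : Fin p → F) (u : F) (m' : Fin q → F) (v : F),
    mul p q (mkS A F m ⊗ₜ[A] u) (mkS A F m' ⊗ₜ[A] v)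
      = Pi.single (p + q + 1) (mkS A F (joinWord F m u m') ⊗ₜ[A] v)

/-- `mul` is the multiplication `S^p(F) × S^q(F) → S^{p+q}(F)` of the symmetric algebra,
recorded with values in `∏ₖ S^k(F)`. -/
def IsMulS (mul : ∀ p q, SymPow A F p →ₗ[A] SymPow A F q →ₗ[A] ∀ k, SymPow A F k) : Prop :=
  ∀ (p q : ℕ) (m : Fin p → F) (m' : Fin q → F),
    mul p q (mkS A F m) (mkS A F m') = Pi.single (p + q) (mkS A F (appendWord F m m'))

/-- `π` is the family of natural maps `R^{n+1}(F) = S^n(F) ⊗ F → S^{n+1}(F)`. -/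
def IsPi (π : ∀ n, RPow A F n →ₗ[A] SymPow A F (n + 1)) : Prop :=
  ∀ (n : ℕ) (m : Fin n → F) (v : F),
    π n (mkS A F m ⊗ₜ[A] v) = mkS A F (Fin.snoc m v)

/-- `T = (T₀, T₁, …)` is a (full) extended `D`-connection:  `T₀ = id_F` (under
`F ≅ R¹(F)`), and `T_i(am) = a T_i(m) + ∑_{j=1}^i (1/j) T_{j-1}(D a) T_{i-j}(m)`. -/
def IsExtConn [Algebra ℚ A] (D : A → F)
    (mul : ∀ p q, RPow A F p →ₗ[A] RPow A F q →ₗ[A] ∀ k, RPow A F k)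
    (T : ∀ i, F →+ RPow A F i) : Prop :=
  (∀ m : F, T 0 m = mkS A F (fun i : Fin 0 => i.elim0) ⊗ₜ[A] m) ∧
  ∀ (i : ℕ), 1 ≤ i → ∀ (a : A) (m : F),
    Pi.single i (T i (a • m))
      = Pi.single i (a • T i m)
        + ∑ j ∈ Finset.Icc 1 i,
            algebraMap ℚ A (1 / (j : ℚ)) •
              mul (j - 1) (i - j) (T (j - 1) (D a)) (T (i - j) m)

/-- `T = (T₀, …, T_N)` is an extended `D`-connection up to order `N`. -/
def IsExtConnTo [Algebra ℚ A] (D : A → F)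
    (mul : ∀ p q, RPow A F p →ₗ[A] RPow A F q →ₗ[A] ∀ k, RPow A F k)
    (N : ℕ) (T : ∀ i, F →+ RPow A F i) : Prop :=
  (∀ m : F, T 0 m = mkS A F (fun i : Fin 0 => i.elim0) ⊗ₜ[A] m) ∧
  ∀ (i : ℕ), 1 ≤ i → i ≤ N → ∀ (a : A) (m : F),
    Pi.single i (T i (a • m))
      = Pi.single i (a • T i m)
        + ∑ j ∈ Finset.Icc 1 i,
            algebraMap ℚ A (1 / (j : ℚ)) •
              mul (j - 1) (i - j) (T (j - 1) (D a)) (T (i - j) m)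

/-- The wedge map `F ⊗_A F →  Λ(F)`, `u ⊗ v ↦ u ∧ v`; an element of `F ⊗ F` maps to
zero in `Λ²(F)` iff its image under this map is zero. -/
def wedgeMap : F ⊗[A] F →ₗ[A] ExteriorAlgebra A F :=
  TensorProduct.lift
    ((LinearMap.mul A (ExteriorAlgebra A F)).compl₁₂ (ExteriorAlgebra.ι A) (ExteriorAlgebra.ι A))
section Lemmas

variable (A : Type) [CommRing A]
variable (F : Type) [AddCommGroup F] [Module A F]

lemma mkS_perm {n : ℕ} (m : Fin n → F) (e : Equiv.Perm (Fin n)) :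
    mkS A F (m ∘ e) = mkS A F m := by
  have h1 : (PiTensorProduct.tprod A m - PiTensorProduct.tprod A (m ∘ e)) ∈ symRel A F n :=
    Submodule.subset_span ⟨m, e, rfl⟩
  have h2 := Submodule.neg_mem _ h1
  rw [neg_sub] at h2
  exact (Submodule.Quotient.eq (symRel A F n)).mpr h2

lemma symPow_hom_ext {n : ℕ} {M : Type} [AddCommGroup M] [Module A M]
    {f g : SymPow A F n →ₗ[A] M}
    (hfg : ∀ m : Fin n → F, f (mkS A F m) = g (mkS A F m)) : f = g := by
  apply Submodule.linearMap_qext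
  apply PiTensorProduct.ext
  apply MultilinearMap.ext
  intro m
  exact hfg m

lemma rpow_hom_ext {p : ℕ} {M : Type} [AddCommGroup M] [Module A M]
    {f g : RPow A F p →ₗ[A] M}
    (hfg : ∀ (m : Fin p → F) (u : F), f (mkS A F m ⊗ₜ[A] u) = g (mkS A F m ⊗ₜ[A] u)) :
    f = g := by
  apply TensorProduct.ext
  refine symPow_hom_ext A F ?_
  intro m
  ext u
  simpa using hfg m u

lemma single_mkS_of_perm {n n' : ℕ} (h : n' = n) (w : Fin n → F) (w' : Fin n' → F)
    (e : Equiv.Perm (Fin n)) (hw : ∀ i : Fin n', w' i = w (e (Fin.cast h i))) :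
    Pi.single (M := fun k => SymPow A F k) n (mkS A F w)
      = Pi.single n' (mkS A F w') := by
  subst h
  have : w' = w ∘ e := by
    funext i
    simpa using hw i
  rw [this, mkS_perm]

/-- Block-swap permutation of `Fin (p + q)`. -/
def blockSwap (p q : ℕ) : Equiv.Perm (Fin (p + q)) where
  toFun j := ⟨if j.val < q then j.val + p else j.val - q, by
    have := j.isLt; split <;> omega⟩
  invFun j := ⟨if j.val < p then j.val + q else j.val - p, by
    have := j.isLt; split <;> omega⟩
  left_inv j := by
    have := j.isLt
    apply Fin.ext
    simp only
    split_ifs <;> omega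
  right_inv j := by
    have := j.isLt
    apply Fin.ext
    simp only
    split_ifs <;> omega

lemma pi_mul_mulS
    (mul : ∀ p q, RPow A F p →ₗ[A] RPow A F q →ₗ[A] ∀ k, RPow A F k)
    (hmul : IsMulR A F mul)
    (π : ∀ n, RPow A F n →ₗ[A] SymPow A F (n + 1)) (hπ : IsPi A F π)
    (mulS : ∀ p q, SymPow A F p →ₗ[A] SymPow A F q →ₗ[A] ∀ k, SymPow A F k)
    (hmulS : IsMulS A F mulS)
    (p q n : ℕ) (hn : p + q + 1 = n) (x : RPow A F p) (y : RPow A F q) :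
    Pi.single (M := fun k => SymPow A F k) (n + 1) (π n ((mul p q x y) n))
      = mulS (p + 1) (q + 1) (π p x) (π q y) := by
  subst hn
  let L : (∀ k, RPow A F k) →ₗ[A] (∀ k, SymPow A F k) :=
    (LinearMap.single (R := A) (φ := fun k => SymPow A F k) (p + q + 1 + 1)).comp
      ((π (p + q + 1)).comp (LinearMap.proj (p + q + 1)))
  have key : ((mul p q).compr₂ L) = (mulS (p + 1) (q + 1)).compl₁₂ (π p) (π q) := by
    refine rpow_hom_ext A F (M := RPow A F q →ₗ[A] ∀ k, SymPow A F k) ?_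
    intro m u
    refine rpow_hom_ext A F (M := ∀ k, SymPow A F k) ?_
    intro m' v
    simp only [LinearMap.compr₂_apply, LinearMap.compl₁₂_apply]
    rw [hmul p q m u m' v, hπ p m u, hπ q m' v, hmulS (p + 1) (q + 1) _ _]
    simp only [L, LinearMap.comp_apply, LinearMap.proj_apply, LinearMap.single_apply,
      Pi.single_eq_same]
    rw [hπ (p + q + 1) (joinWord F m u m') v]
    refine (single_mkS_of_perm A F (show p+q+1+1 = (p+1)+(q+1) by omega) _ _ (Equiv.refl _) ?_).symm
    intro i
    have hi := i.isLt
    simp only [appendWord, joinWord, Fin.snoc, Fin.cast, Equiv.refl_apply, Fin.castLT,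
      Fin.coe_cast, cast_eq]
    split_ifs <;> grind
  have := DFunLike.congr_fun (DFunLike.congr_fun key x) y
  simpa only [LinearMap.compr₂_apply, LinearMap.compl₁₂_apply, L, LinearMap.comp_apply,
    LinearMap.proj_apply, LinearMap.single_apply] using this

lemma mulS_comm
    (mulS : ∀ p q, SymPow A F p →ₗ[A] SymPow A F q →ₗ[A] ∀ k, SymPow A F k)
    (hmulS : IsMulS A F mulS) (p q : ℕ) (x : SymPow A F p) (y : SymPow A F q) :
    mulS p q x y = mulS q p y x := by
  have key : mulS p q = (mulS q p).flip := by
    refine symPow_hom_ext A F (M := SymPow A F q →ₗ[A] ∀ k, SymPow A F k) ?_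
    intro m
    refine symPow_hom_ext A F (M := ∀ k, SymPow A F k) ?_
    intro m'
    simp only [LinearMap.flip_apply]
    rw [hmulS p q m m', hmulS q p m' m]
    refine single_mkS_of_perm A F (show q+p = p+q by omega) _ _ (blockSwap p q) ?_
    intro i
    have hi := i.isLt
    simp only [appendWord, blockSwap, Equiv.coe_fn_mk, Fin.coe_cast]
    split_ifs <;>
      first
        | rfl
        | omega
        | (apply congrArg; apply Fin.ext; simp only [Fin.coe_cast]; omega)
  rw [key]
  rfl

lemma mulS_one_left
    (mulS : ∀ p q, SymPow A F p →ₗ[A] SymPow A F q →ₗ[A] ∀ k, SymPow A F k)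
    (hmulS : IsMulS A F mulS) (q : ℕ) (s : SymPow A F q) :
    mulS 0 q (mkS A F (fun i : Fin 0 => i.elim0)) s
      = Pi.single (M := fun k => SymPow A F k) q s := by
  have key : mulS 0 q (mkS A F (fun i : Fin 0 => i.elim0))
      = LinearMap.single (R := A) (φ := fun k => SymPow A F k) q := by
    apply symPow_hom_ext A F
    intro m
    rw [hmulS 0 q _ m]
    simp only [LinearMap.single_apply]
    refine (single_mkS_of_perm A F (show 0+q = q by omega) _ _ (Equiv.refl _) ?_).symm
    intro i
    simp only [appendWord, Equiv.refl_apply, Fin.coe_cast]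
    split_ifs with h
    · omega
    · apply congrArg; apply Fin.ext; simp only [Fin.coe_cast]; omega
  rw [key]
  rfl

lemma mulS_one_right
    (mulS : ∀ p q, SymPow A F p →ₗ[A] SymPow A F q →ₗ[A] ∀ k, SymPow A F k)
    (hmulS : IsMulS A F mulS) (q : ℕ) (s : SymPow A F q) :
    mulS q 0 s (mkS A F (fun i : Fin 0 => i.elim0))
      = Pi.single (M := fun k => SymPow A F k) q s := by
  rw [mulS_comm A F mulS hmulS]
  exact mulS_one_left A F mulS hmulS q s

lemma sum_Icc_one {M : Type} [AddCommMonoid M] (n : ℕ) (f : ℕ → M) :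
    ∑ j ∈ Finset.Icc 1 n, f j = ∑ k ∈ Finset.range n, f (k + 1) := by
  refine Finset.sum_nbij' (fun j => j - 1) (fun k => k + 1) ?_ ?_ ?_ ?_ ?_ <;>
    intros <;> simp_all [Finset.mem_Icc, Finset.mem_range] <;> omega

end Lemmas

section PiSingle

variable (A : Type) [CommRing A]
variable (F : Type) [AddCommGroup F] [Module A F]

lemma pi_single_smulS (i : ℕ) (a : A) (x : SymPow A F i) :
    Pi.single (M := fun k => SymPow A F k) i (a • x) = a • Pi.single i x := by
  funext k
  by_cases hk : k = i
  · subst hk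
    simp
  · simp [Pi.single_eq_of_ne hk]

lemma pi_single_addS (i : ℕ) (x y : SymPow A F i) :
    Pi.single (M := fun k => SymPow A F k) i (x + y) = Pi.single i x + Pi.single i y := by
  funext k
  by_cases hk : k = i
  · subst hk
    simp
  · simp [Pi.single_eq_of_ne hk]

lemma pi_single_smulR (i : ℕ) (a : A) (x : RPow A F i) :
    Pi.single (M := fun k => RPow A F k) i (a • x) = a • Pi.single i x := by
  funext k
  by_cases hk : k = i
  · subst hk
    simp
  · simp [Pi.single_eq_of_ne hk]

lemma pi_single_addR (i : ℕ) (x y : RPow A F i) :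
    Pi.single (M := fun k => RPow A F k) i (x + y) = Pi.single i x + Pi.single i y := by
  funext k
  by_cases hk : k = i
  · subst hk
    simp
  · simp [Pi.single_eq_of_ne hk]

end PiSingle


set_option maxHeartbeats 2000000 in
/-- Let `T = (T₀, T₁, …)` be an extended `D`-connection and define
`h₀ := id_A` (under `A ≅ S⁰(F)`) and `h_i := (1/i) T_{i-1} ∘ D` (composed with
`R^i(F) → S^i(F)`).  Then `h_i(ab) = ∑_{j=0}^i h_j(a) h_{i-j}(b)`, i.e.
`h = (h₀, h₁, …) : A → ∏ᵢ S^i(F)` is a `B`-algebra homomorphism, a Hasse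
derivation of `F` extending `D`. -/
theorem hasse_from_extConn [Algebra ℚ A] (B : Type) [CommRing B] [Algebra B A]
    [Module B F] [IsScalarTower B A F]
    (D : Derivation B A F)
    (mul : ∀ p q, RPow A F p →ₗ[A] RPow A F q →ₗ[A] ∀ k, RPow A F k)
    (hmul : IsMulR A F mul)
    (T : ∀ i, F →+ RPow A F i)
    (hT : IsExtConn A F (⇑D) mul T)
    (π : ∀ n, RPow A F n →ₗ[A] SymPow A F (n + 1))
    (hπ : IsPi A F π)
    (mulS : ∀ p q, SymPow A F p →ₗ[A] SymPow A F q →ₗ[A] ∀ k, SymPow A F k)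
    (hmulS : IsMulS A F mulS)
    (h : ∀ i, A →+ SymPow A F i)
    (hh0 : ∀ a : A, h 0 a = a • mkS A F (fun i : Fin 0 => i.elim0))
    (hhsucc : ∀ (i : ℕ) (a : A),
      h (i + 1) a = algebraMap ℚ A (1 / (i + 1 : ℚ)) • π i (T i (D a))) :
    (∀ (a b : A) (i : ℕ),
        Pi.single i (h i (a * b))
          = ∑ j ∈ Finset.range (i + 1), mulS j (i - j) (h j a) (h (i - j) b))
    ∧ (∀ a : A, h 1 a = mkS A F ![D a]) := by
  constructor
  · intro a b i
    cases i with
    | zero =>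
      rw [Finset.sum_range_one]
      simp only [Nat.sub_zero, hh0, map_smul, LinearMap.smul_apply,
        mulS_one_left A F mulS hmulS 0, mul_smul]
      rw [smul_comm, pi_single_smulS A F, pi_single_smulS A F]
    | succ n =>
      have law : ∀ (i : ℕ) (x : A) (m : F),
          Pi.single (M := fun k => RPow A F k) i (T i (x • m))
            = Pi.single i (x • T i m)
              + ∑ j ∈ Finset.Icc 1 i,
                  algebraMap ℚ A (1 / (j : ℚ)) •
                    mul (j - 1) (i - j) (T (j - 1) (D x)) (T (i - j) m) := by
        intro i x m
        rcases Nat.eq_zero_or_pos i with hi | hi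
        · subst hi
          simp [hT.1, TensorProduct.tmul_smul,
            Finset.Icc_eq_empty (by omega : ¬ (1 : ℕ) ≤ 0)]
        · exact hT.2 i hi x m
      let L : (∀ k, RPow A F k) →ₗ[A] (∀ k, SymPow A F k) :=
        (LinearMap.single (R := A) (φ := fun k => SymPow A F k) (n + 1)).comp
          ((π n).comp (LinearMap.proj n))
      have hL : ∀ v : RPow A F n, L (Pi.single n v) = Pi.single (n + 1) (π n v) := by
        intro v
        simp [L, LinearMap.single_apply]
      have hπT : ∀ (x : A) (k : ℕ),
          π k (T k (D x)) = algebraMap ℚ A ((k : ℚ) + 1) • h (k + 1) x := by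
        intro x k
        rw [hhsucc k x, smul_smul, ← map_mul, mul_one_div,
          div_self (by positivity : ((k : ℚ) + 1) ≠ 0), map_one, one_smul]
      have main1 : ∀ x y : A,
          Pi.single (M := fun k => SymPow A F k) (n + 1) (π n (T n (x • D y)))
            = algebraMap ℚ A ((n : ℚ) + 1) • (x • Pi.single (n + 1) (h (n + 1) y))
              + ∑ k ∈ Finset.range n,
                  algebraMap ℚ A ((n - k : ℕ) : ℚ) •
                    mulS (k + 1) (n - k) (h (k + 1) x) (h (n - k) y) := by
        intro x y
        have hx := congrArg L (law n x (D y))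
        rw [map_add, hL, hL, map_sum] at hx
        have hsum : ∑ j ∈ Finset.Icc 1 n,
              L (algebraMap ℚ A (1 / (j : ℚ)) •
                mul (j - 1) (n - j) (T (j - 1) (D x)) (T (n - j) (D y)))
            = ∑ k ∈ Finset.range n,
              L (algebraMap ℚ A (1 / ((k : ℚ) + 1)) •
                mul k (n - (k + 1)) (T k (D x)) (T (n - (k + 1)) (D y))) := by
          rw [sum_Icc_one]
          apply Finset.sum_congr rfl
          intro k _
          push_cast
          rfl
        rw [hx, hsum]
        congr 1
        · rw [map_smul, pi_single_smulS A F, hπT y n, pi_single_smulS A F, smul_comm]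
        · apply Finset.sum_congr rfl
          intro k hk
          rw [Finset.mem_range] at hk
          have hn : k + (n - (k + 1)) + 1 = n := by omega
          rw [map_smul]
          have hLmul : L (mul k (n - (k + 1)) (T k (D x)) (T (n - (k + 1)) (D y)))
              = mulS (k + 1) ((n - (k + 1)) + 1)
                  (π k (T k (D x))) (π (n - (k + 1)) (T (n - (k + 1)) (D y))) := by
            have := pi_mul_mulS A F mul hmul π hπ mulS hmulS k (n - (k + 1)) n hn
              (T k (D x)) (T (n - (k + 1)) (D y))
            simpa [L, LinearMap.single_apply] using this
          rw [hLmul, hπT x k, hπT y (n - (k + 1)), map_smul, LinearMap.map_smul₂, smul_smul, smul_smul, ← map_mul, ← map_mul]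
          have h2 : n - (k + 1) + 1 = n - k := by omega
          rw [h2]
          congr 2
          have h3 : ((n - (k + 1) : ℕ) : ℚ) + 1 = ((n - k : ℕ) : ℚ) := by
            push_cast [Nat.cast_sub (by omega : k + 1 ≤ n), Nat.cast_sub (by omega : k ≤ n)]
            ring
          rw [← h3]
          have h4 : ((k : ℚ) + 1) ≠ 0 := by positivity
          field_simp
      have e0 : Pi.single (M := fun k => SymPow A F k) (n + 1) (π n (T n (D (a * b))))
          = Pi.single (n + 1) (π n (T n (a • D b)))
            + Pi.single (n + 1) (π n (T n (b • D a))) := by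
        rw [D.leibniz, map_add, map_add, pi_single_addS A F]
      have sumflip : ∑ k ∈ Finset.range n,
            algebraMap ℚ A ((n - k : ℕ) : ℚ) • mulS (k + 1) (n - k) (h (k + 1) b) (h (n - k) a)
          = ∑ k ∈ Finset.range n,
            algebraMap ℚ A ((k + 1 : ℕ) : ℚ) •
              mulS (k + 1) (n - k) (h (k + 1) a) (h (n - k) b) := by
        refine Eq.trans ?_ (Finset.sum_range_reflect
          (fun k => algebraMap ℚ A ((k + 1 : ℕ) : ℚ) •
            mulS (k + 1) (n - k) (h (k + 1) a) (h (n - k) b)) n)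
        apply Finset.sum_congr rfl
        intro k hk
        rw [Finset.mem_range] at hk
        have e1 : n - 1 - k + 1 = n - k := by omega
        have e2 : n - (n - 1 - k) = k + 1 := by omega
        rw [e1, e2, mulS_comm A F mulS hmulS]
      have j0 : a • Pi.single (M := fun k => SymPow A F k) (n + 1) (h (n + 1) b)
          = mulS 0 (n + 1) (h 0 a) (h (n + 1) b) := by
        rw [hh0, map_smul, LinearMap.smul_apply, mulS_one_left A F mulS hmulS]
      have jlast : b • Pi.single (M := fun k => SymPow A F k) (n + 1) (h (n + 1) a)
          = mulS (n + 1) 0 (h (n + 1) a) (h 0 b) := by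
        rw [hh0, map_smul, mulS_one_right A F mulS hmulS]
      have rhs : ∑ j ∈ Finset.range (n + 2), mulS j (n + 1 - j) (h j a) (h (n + 1 - j) b)
          = mulS 0 (n + 1) (h 0 a) (h (n + 1) b) + mulS (n + 1) 0 (h (n + 1) a) (h 0 b)
            + ∑ k ∈ Finset.range n, mulS (k + 1) (n - k) (h (k + 1) a) (h (n - k) b) := by
        rw [Finset.sum_range_succ, Finset.sum_range_succ']
        have e' : n + 1 - (n + 1) = 0 := by omega
        have e'' : n + 1 - 0 = n + 1 := rfl
        rw [e', e'']
        have hs : ∑ k ∈ Finset.range n,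
              mulS (k + 1) (n + 1 - (k + 1)) (h (k + 1) a) (h (n + 1 - (k + 1)) b)
            = ∑ k ∈ Finset.range n, mulS (k + 1) (n - k) (h (k + 1) a) (h (n - k) b) := by
          apply Finset.sum_congr rfl
          intro k _
          have e : n + 1 - (k + 1) = n - k := by omega
          rw [e]
        rw [hs]
        abel
      have sums : (∑ k ∈ Finset.range n, algebraMap ℚ A ((n - k : ℕ) : ℚ) •
              mulS (k + 1) (n - k) (h (k + 1) a) (h (n - k) b))
            + (∑ k ∈ Finset.range n, algebraMap ℚ A ((k + 1 : ℕ) : ℚ) •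
              mulS (k + 1) (n - k) (h (k + 1) a) (h (n - k) b))
          = algebraMap ℚ A ((n : ℚ) + 1) •
              ∑ k ∈ Finset.range n, mulS (k + 1) (n - k) (h (k + 1) a) (h (n - k) b) := by
        rw [← Finset.sum_add_distrib, Finset.smul_sum]
        apply Finset.sum_congr rfl
        intro k hk
        rw [Finset.mem_range] at hk
        have h5 : ((n - k : ℕ) : ℚ) + ((k + 1 : ℕ) : ℚ) = (n : ℚ) + 1 := by
          push_cast [Nat.cast_sub (by omega : k ≤ n)]
          ring
        rw [← h5, map_add, add_smul]
      rw [rhs, hhsucc n (a * b), pi_single_smulS A F, e0, main1 a b, main1 b a, sumflip,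
        j0, jlast, add_add_add_comm, sums, smul_add, smul_add, smul_smul, smul_smul, smul_smul,
        ← map_mul,
        one_div_mul_cancel (by positivity : ((n : ℚ) + 1) ≠ 0), map_one, one_smul, one_smul,
        one_smul]
  · intro a
    rw [hhsucc 0 a, hT.1 (D a), hπ 0 _ (D a)]
    norm_num
    congr 1
    funext i
    simp [Fin.snoc]

end
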